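/- For every ε > 0, the quantity f(r) = (r - h((1+ε)r, r))/r tends to 0 as r → ∞, where h(Λ, k) = Σ_{i=1}^{k-1} i·Λ^i e^{-Λ}/i! + k·(1 - Σ_{i=0}^{k-1} Λ^i e^{-Λ}/i!). -/

import Mathlib

noncomputable def hPoisson (Λ : ℝ) (k : ℕ) : ℝ :=
  (∑ i ∈ Finset.Ico 1 k, (i : ℝ) * (Λ ^ i * Real.exp (-Λ) / (Nat.factorial i)))
    + (k : ℝ) * (1 - ∑ i ∈ Finset.range k, Λ ^ i * Real.exp (-Λ) / (Nat.factorial i))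

lemma hPoisson_diff (Λ : ℝ) (r : ℕ) :
    (r : ℝ) - hPoisson Λ r
      = ∑ i ∈ Finset.range r,
          ((r : ℝ) - i) * (Λ ^ i * Real.exp (-Λ) / (Nat.factorial i)) := by
  have h1 : ∑ i ∈ Finset.Ico 1 r, (i : ℝ) * (Λ ^ i * Real.exp (-Λ) / (Nat.factorial i))
      = ∑ i ∈ Finset.range r, (i : ℝ) * (Λ ^ i * Real.exp (-Λ) / (Nat.factorial i)) := by
    rw [Finset.range_eq_Ico]
    rcases Nat.eq_zero_or_pos r with h | h
    · simp [h]
    · rw [Finset.sum_eq_sum_Ico_succ_bot h]; simp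
  unfold hPoisson
  rw [h1]
  simp_rw [sub_mul]
  rw [Finset.sum_sub_distrib, ← Finset.mul_sum]
  ring

theorem f_tendsto_zero (ε : ℝ) (hε : 0 < ε) :
    Filter.Tendsto
      (fun r : ℕ => ((r : ℝ) - hPoisson ((1 + ε) * r) r) / r)
      Filter.atTop (nhds 0) := by
  set q : ℝ := (1 + ε) * Real.exp (-ε) with hq
  have hε1 : (0:ℝ) < 1 + ε := by linarith
  have hq0 : 0 ≤ q := by positivity
  have hq1 : q < 1 := by
    have h := Real.add_one_lt_exp hε.ne'
    have hpos := Real.exp_pos ε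
    rw [hq, Real.exp_neg]
    rw [mul_inv_lt_iff₀ hpos, one_mul]
    linarith
  have key : ∀ r : ℕ, ((r : ℝ) - hPoisson ((1 + ε) * r) r) / r ∈ Set.Icc 0 (q ^ r) := by
    intro r
    set Λ : ℝ := (1 + ε) * r with hΛ
    have hΛ0 : 0 ≤ Λ := by positivity
    have hterm : ∀ i ∈ Finset.range r,
        (0:ℝ) ≤ ((r : ℝ) - i) * (Λ ^ i * Real.exp (-Λ) / (Nat.factorial i)) := by
      intro i hi
      have hi' : (i : ℝ) ≤ r := by
        exact_mod_cast (Finset.mem_range.mp hi).le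
      have h2 : (0:ℝ) ≤ Λ ^ i * Real.exp (-Λ) / (Nat.factorial i) := by positivity
      have h1 : (0:ℝ) ≤ (r : ℝ) - i := by linarith
      exact mul_nonneg h1 h2
    constructor
    · rw [hPoisson_diff]
      exact div_nonneg (Finset.sum_nonneg hterm) (Nat.cast_nonneg r)
    · rcases Nat.eq_zero_or_pos r with h | hr
      · subst h
        simp [hPoisson]
      have hrpos : (0:ℝ) < r := by exact_mod_cast hr
      rw [hPoisson_diff, div_le_iff₀ hrpos]
      calc ∑ i ∈ Finset.range r,
            ((r : ℝ) - i) * (Λ ^ i * Real.exp (-Λ) / (Nat.factorial i))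
          ≤ ∑ i ∈ Finset.range r,
            (r : ℝ) * (Λ ^ i * Real.exp (-Λ) / (Nat.factorial i)) := by
            apply Finset.sum_le_sum
            intro i hi
            have h2 : (0:ℝ) ≤ Λ ^ i * Real.exp (-Λ) / (Nat.factorial i) := by positivity
            have hi0 : (0:ℝ) ≤ (i:ℝ) := Nat.cast_nonneg i
            nlinarith
        _ = (∑ i ∈ Finset.range r,
            Λ ^ i * Real.exp (-Λ) / (Nat.factorial i)) * r := by
            rw [← Finset.mul_sum]; ring
        _ ≤ q ^ r * r := by
            apply mul_le_mul_of_nonneg_right _ hrpos.le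
            calc ∑ i ∈ Finset.range r, Λ ^ i * Real.exp (-Λ) / (Nat.factorial i)
                ≤ ∑ i ∈ Finset.range r,
                  (1 + ε) ^ (r - 1) * Real.exp (-Λ) * ((r:ℝ) ^ i / (Nat.factorial i)) := by
                  apply Finset.sum_le_sum
                  intro i hi
                  have hi' : i ≤ r - 1 := Nat.le_sub_one_of_lt (Finset.mem_range.mp hi)
                  have hΛi : Λ ^ i = (1 + ε) ^ i * (r:ℝ) ^ i := mul_pow _ _ _
                  have hmono : ((1:ℝ) + ε) ^ i ≤ (1 + ε) ^ (r - 1) :=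
                    pow_le_pow_right₀ (by linarith) hi'
                  have hfac : (0:ℝ) < (Nat.factorial i : ℝ) := by
                    exact_mod_cast i.factorial_pos
                  rw [hΛi]
                  rw [div_le_iff₀ hfac] at *
                  have hnn : (0:ℝ) ≤ (r:ℝ) ^ i * Real.exp (-Λ) := by positivity
                  calc (1 + ε) ^ i * (r:ℝ) ^ i * Real.exp (-Λ)
                      ≤ (1 + ε) ^ (r-1) * ((r:ℝ) ^ i * Real.exp (-Λ)) := by
                        rw [mul_assoc]
                        exact mul_le_mul_of_nonneg_right hmono hnn
                    _ = (1 + ε) ^ (r - 1) * Real.exp (-Λ) * ((r:ℝ) ^ i / (Nat.factorial i)) * (Nat.factorial i) := by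
                        field_simp
              _ = (1 + ε) ^ (r - 1) * Real.exp (-Λ) *
                    ∑ i ∈ Finset.range r, ((r:ℝ) ^ i / (Nat.factorial i)) := by
                  rw [Finset.mul_sum]
              _ ≤ (1 + ε) ^ (r - 1) * Real.exp (-Λ) * Real.exp r := by
                  apply mul_le_mul_of_nonneg_left
                    (Real.sum_le_exp_of_nonneg (Nat.cast_nonneg r) r) (by positivity)
              _ ≤ (1 + ε) ^ r * (Real.exp (-Λ) * Real.exp r) := by
                  rw [mul_assoc]
                  apply mul_le_mul_of_nonneg_right
                    (pow_le_pow_right₀ (by linarith) (Nat.sub_le r 1)) (by positivity)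
              _ = q ^ r := by
                  rw [← Real.exp_add, hq, mul_pow, ← Real.exp_nat_mul]
                  congr 1
                  rw [hΛ]
                  ring
  apply squeeze_zero (fun r => (key r).1) (fun r => (key r).2)
  exact tendsto_pow_atTop_nhds_zero_of_lt_one hq0 hq1
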